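/- In 2-neighbour bootstrap percolation on [n]^2, every percolating set of size n requires at least n − 1 time steps to percolate. Hence m_2(n) = n − 1. -/
import Mathlib


/-- The grid `[n]^d = {1,...,n}^d`, embedded in `ℕ^d`. -/
def gridSet (n d : ℕ) : Set (Fin d → ℕ) := {v | ∀ i, 1 ≤ v i ∧ v i ≤ n}

/-- Adjacency: differ by 1 in exactly one coordinate. -/
def gridAdj {d : ℕ} (u v : Fin d → ℕ) : Prop :=
  ∃ j, (u j = v j + 1 ∨ v j = u j + 1) ∧ ∀ i, i ≠ j → u i = v i

/-- One round of `r`-neighbour bootstrap percolation on `[n]^d`. -/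
def bpStep (n d r : ℕ) (S : Set (Fin d → ℕ)) : Set (Fin d → ℕ) :=
  S ∪ {v ∈ gridSet n d | r ≤ {u ∈ S | gridAdj u v}.ncard}

/-- Infected set after `t` rounds, starting from `A`. -/
def infected (n d r : ℕ) (A : Set (Fin d → ℕ)) (t : ℕ) : Set (Fin d → ℕ) :=
  (bpStep n d r)^[t] A

/-- The closure of `A`: all eventually infected vertices. -/
def bpClosure (n d r : ℕ) (A : Set (Fin d → ℕ)) : Set (Fin d → ℕ) :=
  ⋃ t, infected n d r A t

/-- `A` percolates if every grid vertex is eventually infected. -/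
def percolates (n d r : ℕ) (A : Set (Fin d → ℕ)) : Prop :=
  gridSet n d ⊆ bpClosure n d r A

/-- Percolation time: least `t` with the whole grid infected. -/
noncomputable def percTime (n d r : ℕ) (A : Set (Fin d → ℕ)) : ℕ :=
  sInf {t | gridSet n d ⊆ infected n d r A t}

/-- `V_k`: grid vertices of coordinate sum `k`. -/
def hyperplane (n d k : ℕ) : Set (Fin d → ℕ) := {v ∈ gridSet n d | ∑ i, v i = k}

/-- The "cyclic combination" set `A = ⋃_{i=1}^d V_{in}`. -/
def diagUnion (n d : ℕ) : Set (Fin d → ℕ) :=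
  ⋃ i ∈ Finset.Icc 1 d, hyperplane n d (i * n)


set_option linter.unreachableTactic false
set_option linter.unnecessarySeqFocus false
set_option linter.unusedTactic false


def nbr (q p : ℕ × ℕ) : Prop :=
  (q.1 = p.1 ∧ (q.2 + 1 = p.2 ∨ p.2 + 1 = q.2)) ∨
  (q.2 = p.2 ∧ (q.1 + 1 = p.1 ∨ p.1 + 1 = q.1))

instance nbrDec : ∀ q p, Decidable (nbr q p) := fun q p => by unfold nbr; infer_instance

def gr (n : ℕ) : Finset (ℕ × ℕ) := Finset.Icc 1 n ×ˢ Finset.Icc 1 n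

lemma mem_gr {n : ℕ} {p : ℕ × ℕ} :
    p ∈ gr n ↔ (1 ≤ p.1 ∧ p.1 ≤ n) ∧ (1 ≤ p.2 ∧ p.2 ≤ n) := by
  simp [gr, Finset.mem_product, Finset.mem_Icc]

lemma card_gr (n : ℕ) : (gr n).card = n * n := by
  simp [gr, Nat.card_Icc]

def pdist (p q : ℕ × ℕ) : ℕ := (p.1 - q.1) + (q.1 - p.1) + ((p.2 - q.2) + (q.2 - p.2))

lemma nbr_pdist {q p : ℕ × ℕ} (h : nbr q p) : pdist p q = 1 := by
  unfold nbr at h; unfold pdist; omega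

lemma pdist_tri (p q c : ℕ × ℕ) : pdist p c ≤ pdist p q + pdist q c := by
  unfold pdist; omega

-- the set of "edges" (ordered adjacent pairs) of the grid
def EP (n : ℕ) : Finset ((ℕ × ℕ) × (ℕ × ℕ)) :=
  (gr n ×ˢ gr n).filter fun z => nbr z.1 z.2

lemma mem_EP {n : ℕ} {z : (ℕ × ℕ) × (ℕ × ℕ)} :
    z ∈ EP n ↔ z.1 ∈ gr n ∧ z.2 ∈ gr n ∧ nbr z.1 z.2 := by
  simp [EP, Finset.mem_filter, Finset.mem_product]; tauto

lemma gr_filter_fst (n : ℕ) :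
    (gr n).filter (fun q => q.1 < n) = Finset.Icc 1 (n-1) ×ˢ Finset.Icc 1 n := by
  ext ⟨a, b⟩
  simp [gr, Finset.mem_filter, Finset.mem_product, Finset.mem_Icc]
  omega

lemma gr_filter_snd (n : ℕ) :
    (gr n).filter (fun q => q.2 < n) = Finset.Icc 1 n ×ˢ Finset.Icc 1 (n-1) := by
  ext ⟨a, b⟩
  simp [gr, Finset.mem_filter, Finset.mem_product, Finset.mem_Icc]
  omega

lemma card_gr_fst (n : ℕ) : ((gr n).filter (fun q => q.1 < n)).card = (n-1) * n := by
  rw [gr_filter_fst]; simp [Nat.card_Icc]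

lemma card_gr_snd (n : ℕ) : ((gr n).filter (fun q => q.2 < n)).card = n * (n-1) := by
  rw [gr_filter_snd]; simp [Nat.card_Icc]
lemma nbr_symm {q p : ℕ × ℕ} (h : nbr q p) : nbr p q := by unfold nbr at *; omega
lemma card_EP_R (n : ℕ) :
    ((EP n).filter (fun z => z.1.1 + 1 = z.2.1)).card
      = ((gr n).filter (fun q => q.1 < n)).card := by
  apply Finset.card_bij (fun z _ => z.1)
  · rintro z hz
    simp only [Finset.mem_filter] at hz ⊢
    obtain ⟨hz, hR⟩ := hz
    rw [mem_EP] at hz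
    refine ⟨hz.1, ?_⟩
    have := (mem_gr.mp hz.2.1).1.2
    omega
  · rintro z hz z' hz' h
    simp only [Finset.mem_filter, mem_EP] at hz hz'
    obtain ⟨⟨h1, h2, h3⟩, hR⟩ := hz
    obtain ⟨⟨h1', h2', h3'⟩, hR'⟩ := hz'
    have e2 : z.1.2 = z.2.2 := by unfold nbr at h3; omega
    have e2' : z'.1.2 = z'.2.2 := by unfold nbr at h3'; omega
    have hh1 : z.1.1 = z'.1.1 := by rw [h]
    have hh2 : z.1.2 = z'.1.2 := by rw [h]
    have : z.2 = z'.2 := by apply Prod.ext <;> omega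
    exact Prod.ext h this
  · rintro q hq
    simp only [Finset.mem_filter] at hq
    refine ⟨(q, (q.1 + 1, q.2)), ?_, rfl⟩
    simp only [Finset.mem_filter, mem_EP]
    have h1 := mem_gr.mp hq.1
    refine ⟨⟨hq.1, mem_gr.mpr ⟨⟨by omega, by omega⟩, h1.2⟩, ?_⟩, trivial⟩
    right; exact ⟨rfl, Or.inl rfl⟩

lemma card_EP_L (n : ℕ) :
    ((EP n).filter (fun z => z.2.1 + 1 = z.1.1)).card
      = ((gr n).filter (fun q => q.1 < n)).card := by
  apply Finset.card_bij (fun z _ => z.2)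
  · rintro z hz
    simp only [Finset.mem_filter] at hz ⊢
    obtain ⟨hz, hR⟩ := hz
    rw [mem_EP] at hz
    refine ⟨hz.2.1, ?_⟩
    have := (mem_gr.mp hz.1).1.2
    omega
  · rintro z hz z' hz' h
    simp only [Finset.mem_filter, mem_EP] at hz hz'
    obtain ⟨⟨h1, h2, h3⟩, hR⟩ := hz
    obtain ⟨⟨h1', h2', h3'⟩, hR'⟩ := hz'
    have e2 : z.1.2 = z.2.2 := by unfold nbr at h3; omega
    have e2' : z'.1.2 = z'.2.2 := by unfold nbr at h3'; omega
    have hh1 : z.2.1 = z'.2.1 := by rw [h]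
    have hh2 : z.2.2 = z'.2.2 := by rw [h]
    have : z.1 = z'.1 := by apply Prod.ext <;> omega
    exact Prod.ext this h
  · rintro q hq
    simp only [Finset.mem_filter] at hq
    refine ⟨((q.1 + 1, q.2), q), ?_, rfl⟩
    simp only [Finset.mem_filter, mem_EP]
    have h1 := mem_gr.mp hq.1
    refine ⟨⟨mem_gr.mpr ⟨⟨by omega, by omega⟩, h1.2⟩, hq.1, ?_⟩, trivial⟩
    right; exact ⟨rfl, Or.inr rfl⟩

lemma card_EP_U (n : ℕ) :
    ((EP n).filter (fun z => z.1.2 + 1 = z.2.2)).card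
      = ((gr n).filter (fun q => q.2 < n)).card := by
  apply Finset.card_bij (fun z _ => z.1)
  · rintro z hz
    simp only [Finset.mem_filter] at hz ⊢
    obtain ⟨hz, hR⟩ := hz
    rw [mem_EP] at hz
    refine ⟨hz.1, ?_⟩
    have := (mem_gr.mp hz.2.1).2.2
    omega
  · rintro z hz z' hz' h
    simp only [Finset.mem_filter, mem_EP] at hz hz'
    obtain ⟨⟨h1, h2, h3⟩, hR⟩ := hz
    obtain ⟨⟨h1', h2', h3'⟩, hR'⟩ := hz'
    have e2 : z.1.1 = z.2.1 := by unfold nbr at h3; omega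
    have e2' : z'.1.1 = z'.2.1 := by unfold nbr at h3'; omega
    have hh1 : z.1.1 = z'.1.1 := by rw [h]
    have hh2 : z.1.2 = z'.1.2 := by rw [h]
    have : z.2 = z'.2 := by apply Prod.ext <;> omega
    exact Prod.ext h this
  · rintro q hq
    simp only [Finset.mem_filter] at hq
    refine ⟨(q, (q.1, q.2 + 1)), ?_, rfl⟩
    simp only [Finset.mem_filter, mem_EP]
    have h1 := mem_gr.mp hq.1
    refine ⟨⟨hq.1, mem_gr.mpr ⟨h1.1, ⟨by omega, by omega⟩⟩, ?_⟩, trivial⟩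
    left; exact ⟨rfl, Or.inl rfl⟩

lemma card_EP_D (n : ℕ) :
    ((EP n).filter (fun z => z.2.2 + 1 = z.1.2)).card
      = ((gr n).filter (fun q => q.2 < n)).card := by
  apply Finset.card_bij (fun z _ => z.2)
  · rintro z hz
    simp only [Finset.mem_filter] at hz ⊢
    obtain ⟨hz, hR⟩ := hz
    rw [mem_EP] at hz
    refine ⟨hz.2.1, ?_⟩
    have := (mem_gr.mp hz.1).2.2
    omega
  · rintro z hz z' hz' h
    simp only [Finset.mem_filter, mem_EP] at hz hz'
    obtain ⟨⟨h1, h2, h3⟩, hR⟩ := hz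
    obtain ⟨⟨h1', h2', h3'⟩, hR'⟩ := hz'
    have e2 : z.1.1 = z.2.1 := by unfold nbr at h3; omega
    have e2' : z'.1.1 = z'.2.1 := by unfold nbr at h3'; omega
    have hh1 : z.2.1 = z'.2.1 := by rw [h]
    have hh2 : z.2.2 = z'.2.2 := by rw [h]
    have : z.1 = z'.1 := by apply Prod.ext <;> omega
    exact Prod.ext this h
  · rintro q hq
    simp only [Finset.mem_filter] at hq
    refine ⟨((q.1, q.2 + 1), q), ?_, rfl⟩
    simp only [Finset.mem_filter, mem_EP]
    have h1 := mem_gr.mp hq.1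
    refine ⟨⟨mem_gr.mpr ⟨h1.1, ⟨by omega, by omega⟩⟩, hq.1, ?_⟩, trivial⟩
    left; exact ⟨rfl, Or.inr rfl⟩
lemma EP_partition (n : ℕ) :
    (EP n).card = ((EP n).filter (fun z => z.1.1 + 1 = z.2.1)).card
      + ((EP n).filter (fun z => z.2.1 + 1 = z.1.1)).card
      + ((EP n).filter (fun z => z.1.2 + 1 = z.2.2)).card
      + ((EP n).filter (fun z => z.2.2 + 1 = z.1.2)).card := by
  have hdisj : ∀ (c d : (ℕ × ℕ) × (ℕ × ℕ) → Prop) [DecidablePred c] [DecidablePred d],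
      (∀ z ∈ EP n, c z → d z → False) →
      Disjoint ((EP n).filter c) ((EP n).filter d) := by
    intro c d _ _ h
    rw [Finset.disjoint_left]
    intro z hz hz'
    simp only [Finset.mem_filter] at hz hz'
    exact h z hz.1 hz.2 hz'.2
  have hnbr : ∀ z ∈ EP n, nbr z.1 z.2 := fun z hz => (mem_EP.mp hz).2.2
  rw [← Finset.card_union_of_disjoint (hdisj _ _ (by
        intro z hz h1 h2
        have := hnbr z hz; unfold nbr at this; omega))]
  rw [← Finset.card_union_of_disjoint (by
        apply Finset.disjoint_union_left.mpr
        constructor <;> apply hdisj <;> intro z hz h1 h2 <;>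
          [skip; skip] <;> (have := hnbr z hz; unfold nbr at this; omega))]
  rw [← Finset.card_union_of_disjoint (by
        apply Finset.disjoint_union_left.mpr
        refine ⟨Finset.disjoint_union_left.mpr ⟨?_, ?_⟩, ?_⟩ <;>
          apply hdisj <;> intro z hz h1 h2 <;>
          (have := hnbr z hz; unfold nbr at this; omega))]
  congr 1
  ext z
  simp only [Finset.mem_union, Finset.mem_filter]
  constructor
  · intro h
    have := hnbr z h
    have hc : z.1.1 + 1 = z.2.1 ∨ z.2.1 + 1 = z.1.1 ∨ z.1.2 + 1 = z.2.2 ∨ z.2.2 + 1 = z.1.2 := by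
      unfold nbr at this; omega
    tauto
  · tauto

lemma card_EP (n : ℕ) : (EP n).card = 4 * (n * (n-1)) := by
  rw [EP_partition, card_EP_R, card_EP_L, card_EP_U, card_EP_D,
    card_gr_fst, card_gr_snd]
  have : (n - 1) * n = n * (n - 1) := Nat.mul_comm _ _
  generalize n * (n-1) = a at *
  omega
lemma EP_split (n : ℕ) (τ : ℕ × ℕ → ℕ) :
    (EP n).card = ((EP n).filter (fun z => τ z.1 < τ z.2)).card
      + ((EP n).filter (fun z => τ z.2 < τ z.1)).card
      + ((EP n).filter (fun z => τ z.1 = τ z.2)).card := by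
  rw [← Finset.card_union_of_disjoint, ← Finset.card_union_of_disjoint]
  · congr 1
    ext z
    simp only [Finset.mem_union, Finset.mem_filter]
    constructor
    · intro h
      have : τ z.1 < τ z.2 ∨ τ z.2 < τ z.1 ∨ τ z.1 = τ z.2 := by omega
      tauto
    · tauto
  · rw [Finset.disjoint_left]
    intro z hz hz'
    simp only [Finset.mem_union, Finset.mem_filter] at hz hz'
    omega
  · rw [Finset.disjoint_left]
    intro z hz hz'
    simp only [Finset.mem_filter] at hz hz'
    omega

lemma card_gt_eq_lt (n : ℕ) (τ : ℕ × ℕ → ℕ) :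
    ((EP n).filter (fun z => τ z.2 < τ z.1)).card
      = ((EP n).filter (fun z => τ z.1 < τ z.2)).card := by
  apply Finset.card_bij (fun z _ => (z.2, z.1))
  · intro z hz
    simp only [Finset.mem_filter, mem_EP] at hz ⊢
    exact ⟨⟨hz.1.2.1, hz.1.1, nbr_symm hz.1.2.2⟩, hz.2⟩
  · intro z hz z' hz' h
    have h1 : z.2 = z'.2 := congrArg Prod.fst h
    have h2 : z.1 = z'.1 := congrArg Prod.snd h
    exact Prod.ext h2 h1
  · intro z hz
    simp only [Finset.mem_filter, mem_EP] at hz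
    exact ⟨(z.2, z.1), by
      simp only [Finset.mem_filter, mem_EP]
      exact ⟨⟨hz.1.2.1, hz.1.1, nbr_symm hz.1.2.2⟩, hz.2⟩, rfl⟩

lemma card_lt_eq_sum (n : ℕ) (τ : ℕ × ℕ → ℕ) :
    ((EP n).filter (fun z => τ z.1 < τ z.2)).card
      = ∑ p ∈ gr n, ((gr n).filter (fun q => nbr q p ∧ τ q < τ p)).card := by
  rw [Finset.card_eq_sum_card_fiberwise (f := Prod.snd) (t := gr n)
      (fun z hz => (mem_EP.mp (Finset.mem_filter.mp hz).1).2.1)]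
  apply Finset.sum_congr rfl
  intro p hp
  apply Finset.card_bij (fun z _ => z.1)
  · intro z hz
    simp only [Finset.mem_filter, mem_EP] at hz ⊢
    obtain ⟨⟨hz1, hlt⟩, hsnd⟩ := hz
    subst hsnd
    exact ⟨hz1.1, hz1.2.2, hlt⟩
  · intro z hz z' hz' h
    simp only [Finset.mem_filter] at hz hz'
    exact Prod.ext h (hz.2.trans hz'.2.symm)
  · intro q hq
    simp only [Finset.mem_filter] at hq
    exact ⟨(q, p), by
      simp only [Finset.mem_filter, mem_EP]
      exact ⟨⟨⟨hq.1, hp, hq.2.1⟩, hq.2.2⟩, trivial⟩, rfl⟩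

lemma rigidity (n : ℕ) (τ : ℕ × ℕ → ℕ)
    (hseed : ((gr n).filter (fun p => τ p = 0)).card = n)
    (h2 : ∀ p ∈ gr n, τ p ≠ 0 →
      2 ≤ ((gr n).filter (fun q => nbr q p ∧ τ q < τ p)).card) :
    (∀ p ∈ gr n, ∀ q ∈ gr n, nbr q p → τ q ≠ τ p) ∧
    (∀ p ∈ gr n, τ p ≠ 0 →
      ((gr n).filter (fun q => nbr q p ∧ τ q < τ p)).card = 2) := by
  have hcard_gr : (gr n).card = n * n := by simp [gr, Nat.card_Icc]
  have hmul : n * n = n * (n-1) + n := by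
    rcases n with _ | m
    · simp
    · have : (m + 1) * (m + 1) = (m+1) * m + (m+1) := Nat.mul_succ (m+1) m
      simpa using this
  have hns : ((gr n).filter (fun p => ¬ (τ p = 0))).card = n * (n - 1) := by
    have := Finset.card_filter_add_card_filter_not
      (s := gr n) (p := fun p => τ p = 0)
    omega
  -- lower bound for the sum
  have hlow : 2 * (n * (n-1)) ≤ ∑ p ∈ gr n, ((gr n).filter (fun q => nbr q p ∧ τ q < τ p)).card := by
    have hsub : ((gr n).filter (fun p => ¬ (τ p = 0))) ⊆ gr n := Finset.filter_subset _ _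
    have h1 : ∑ p ∈ (gr n).filter (fun p => ¬ (τ p = 0)),
        ((gr n).filter (fun q => nbr q p ∧ τ q < τ p)).card
        ≤ ∑ p ∈ gr n, ((gr n).filter (fun q => nbr q p ∧ τ q < τ p)).card :=
      Finset.sum_le_sum_of_subset hsub
    have h0 : ∑ p ∈ (gr n).filter (fun p => ¬ (τ p = 0)), 2
        ≤ ∑ p ∈ (gr n).filter (fun p => ¬ (τ p = 0)),
          ((gr n).filter (fun q => nbr q p ∧ τ q < τ p)).card := by
      apply Finset.sum_le_sum
      intro p hp
      simp only [Finset.mem_filter] at hp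
      exact h2 p hp.1 hp.2
    rw [Finset.sum_const, hns, smul_eq_mul, mul_comm] at h0
    omega
  have hsplit := EP_split n τ
  rw [card_EP, card_gt_eq_lt, card_lt_eq_sum] at hsplit
  set Ssum := ∑ p ∈ gr n, ((gr n).filter (fun q => nbr q p ∧ τ q < τ p)).card with hSsum
  have hEeq : ((EP n).filter (fun z => τ z.1 = τ z.2)).card = 0 ∧ Ssum = 2 * (n * (n-1)) := by
    constructor <;> omega
  constructor
  · intro p hp q hq hnbr heq
    have : (q, p) ∈ (EP n).filter (fun z => τ z.1 = τ z.2) := by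
      simp only [Finset.mem_filter, mem_EP]
      exact ⟨⟨hq, hp, hnbr⟩, heq⟩
    have := Finset.card_pos.mpr ⟨(q, p), this⟩
    omega
  · intro p hp hp0
    by_contra hne
    have h3 : 3 ≤ ((gr n).filter (fun q => nbr q p ∧ τ q < τ p)).card := by
      have := h2 p hp hp0
      omega
    have hpns : p ∈ (gr n).filter (fun p => ¬ (τ p = 0)) := by
      simp only [Finset.mem_filter]; exact ⟨hp, hp0⟩
    have hstrict : ∑ q ∈ (gr n).filter (fun p => ¬ (τ p = 0)), 2
        < ∑ q ∈ (gr n).filter (fun p => ¬ (τ p = 0)),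
          ((gr n).filter (fun q' => nbr q' q ∧ τ q' < τ q)).card := by
      apply Finset.sum_lt_sum
      · intro i hi
        simp only [Finset.mem_filter] at hi
        exact h2 i hi.1 hi.2
      · exact ⟨p, hpns, by omega⟩
    rw [Finset.sum_const, hns, smul_eq_mul, mul_comm] at hstrict
    have hle : ∑ q ∈ (gr n).filter (fun p => ¬ (τ p = 0)),
        ((gr n).filter (fun q' => nbr q' q ∧ τ q' < τ q)).card ≤ Ssum :=
      Finset.sum_le_sum_of_subset (Finset.filter_subset _ _)
    omega
lemma exists_nbr {n : ℕ} (hn : 2 ≤ n) {p : ℕ × ℕ} (hp : p ∈ gr n) :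
    ∃ q ∈ gr n, nbr q p := by
  rw [mem_gr] at hp
  rcases Nat.lt_or_ge p.1 n with h | h
  · exact ⟨(p.1 + 1, p.2), mem_gr.mpr ⟨⟨by omega, by omega⟩, hp.2⟩,
      Or.inr ⟨rfl, by omega⟩⟩
  · exact ⟨(p.1 - 1, p.2), mem_gr.mpr ⟨⟨by omega, by omega⟩, hp.2⟩,
      Or.inr ⟨rfl, by omega⟩⟩

lemma corner_of_few_nbrs {n : ℕ} (hn : 2 ≤ n) {p : ℕ × ℕ} (hp : p ∈ gr n)
    (h : ((gr n).filter (fun q => nbr q p)).card ≤ 2) :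
    (p.1 = 1 ∨ p.1 = n) ∧ (p.2 = 1 ∨ p.2 = n) := by
  rw [mem_gr] at hp
  by_contra hcon
  -- then there are at least 3 neighbours
  have key : ∃ a b c : ℕ × ℕ, a ≠ b ∧ a ≠ c ∧ b ≠ c ∧
      a ∈ (gr n).filter (fun q => nbr q p) ∧
      b ∈ (gr n).filter (fun q => nbr q p) ∧
      c ∈ (gr n).filter (fun q => nbr q p) := by
    have hmem : ∀ q : ℕ × ℕ, (1 ≤ q.1 ∧ q.1 ≤ n) ∧ (1 ≤ q.2 ∧ q.2 ≤ n) → nbr q p →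
        q ∈ (gr n).filter (fun q => nbr q p) := by
      intro q h1 h2
      simp only [Finset.mem_filter]
      exact ⟨mem_gr.mpr h1, h2⟩
    rcases Classical.em (1 < p.1 ∧ p.1 < n) with hx | hx
    · -- both horizontal neighbours exist; add one vertical
      rcases Nat.lt_or_ge p.2 n with hv | hv
      · refine ⟨(p.1 - 1, p.2), (p.1 + 1, p.2), (p.1, p.2 + 1), ?_, ?_, ?_, ?_, ?_, ?_⟩
        · intro h; simp only [Prod.mk.injEq] at h; omega
        · intro h; simp only [Prod.mk.injEq] at h; omega
        · intro h; simp only [Prod.mk.injEq] at h; omega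
        · exact hmem _ ⟨⟨by omega, by omega⟩, by omega⟩ (Or.inr ⟨rfl, by omega⟩)
        · exact hmem _ ⟨⟨by omega, by omega⟩, by omega⟩ (Or.inr ⟨rfl, by omega⟩)
        · exact hmem _ ⟨⟨by omega, by omega⟩, by omega⟩ (Or.inl ⟨rfl, by omega⟩)
      · refine ⟨(p.1 - 1, p.2), (p.1 + 1, p.2), (p.1, p.2 - 1), ?_, ?_, ?_, ?_, ?_, ?_⟩
        · intro h; simp only [Prod.mk.injEq] at h; omega
        · intro h; simp only [Prod.mk.injEq] at h; omega
        · intro h; simp only [Prod.mk.injEq] at h; omega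
        · exact hmem _ ⟨⟨by omega, by omega⟩, by omega⟩ (Or.inr ⟨rfl, by omega⟩)
        · exact hmem _ ⟨⟨by omega, by omega⟩, by omega⟩ (Or.inr ⟨rfl, by omega⟩)
        · exact hmem _ ⟨⟨by omega, by omega⟩, by omega⟩ (Or.inl ⟨rfl, by omega⟩)
    · -- then 1 < p.2 ∧ p.2 < n must hold
      have hy : 1 < p.2 ∧ p.2 < n := by omega
      rcases Nat.lt_or_ge p.1 n with hv | hv
      · refine ⟨(p.1, p.2 - 1), (p.1, p.2 + 1), (p.1 + 1, p.2), ?_, ?_, ?_, ?_, ?_, ?_⟩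
        · intro h; simp only [Prod.mk.injEq] at h; omega
        · intro h; simp only [Prod.mk.injEq] at h; omega
        · intro h; simp only [Prod.mk.injEq] at h; omega
        · exact hmem _ ⟨by omega, ⟨by omega, by omega⟩⟩ (Or.inl ⟨rfl, by omega⟩)
        · exact hmem _ ⟨by omega, ⟨by omega, by omega⟩⟩ (Or.inl ⟨rfl, by omega⟩)
        · exact hmem _ ⟨⟨by omega, by omega⟩, by omega⟩ (Or.inr ⟨rfl, by omega⟩)
      · refine ⟨(p.1, p.2 - 1), (p.1, p.2 + 1), (p.1 - 1, p.2), ?_, ?_, ?_, ?_, ?_, ?_⟩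
        · intro h; simp only [Prod.mk.injEq] at h; omega
        · intro h; simp only [Prod.mk.injEq] at h; omega
        · intro h; simp only [Prod.mk.injEq] at h; omega
        · exact hmem _ ⟨by omega, ⟨by omega, by omega⟩⟩ (Or.inl ⟨rfl, by omega⟩)
        · exact hmem _ ⟨by omega, ⟨by omega, by omega⟩⟩ (Or.inl ⟨rfl, by omega⟩)
        · exact hmem _ ⟨⟨by omega, by omega⟩, by omega⟩ (Or.inr ⟨rfl, by omega⟩)
  obtain ⟨a, b, c, hab, hac, hbc, ha, hb, hc⟩ := key
  have : 3 ≤ ((gr n).filter (fun q => nbr q p)).card := by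
    have h3 : ({a, b, c} : Finset (ℕ × ℕ)) ⊆ (gr n).filter (fun q => nbr q p) := by
      intro x hx
      simp only [Finset.mem_insert, Finset.mem_singleton] at hx
      rcases hx with rfl | rfl | rfl <;> assumption
    have hcard : ({a, b, c} : Finset (ℕ × ℕ)).card = 3 := by
      rw [Finset.card_insert_of_notMem (by simp [hab, hac]),
        Finset.card_insert_of_notMem (by simp [hbc]), Finset.card_singleton]
    calc 3 = ({a, b, c} : Finset (ℕ × ℕ)).card := hcard.symm
      _ ≤ _ := Finset.card_le_card h3
  omega
lemma climb {n : ℕ} (hn : 2 ≤ n) (τ : ℕ × ℕ → ℕ)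
    (hnotie : ∀ p ∈ gr n, ∀ q ∈ gr n, nbr q p → τ q ≠ τ p)
    (hexact : ∀ p ∈ gr n, τ p ≠ 0 →
      ((gr n).filter (fun q => nbr q p ∧ τ q < τ p)).card = 2) :
    ∀ (j : ℕ) (p : ℕ × ℕ), p ∈ gr n → (gr n).sup τ - τ p ≤ j →
    ∃ c ∈ gr n, ((c.1 = 1 ∨ c.1 = n) ∧ (c.2 = 1 ∨ c.2 = n)) ∧ τ p + pdist p c ≤ τ c := by
  have stuck : ∀ p ∈ gr n, (¬ ∃ q ∈ gr n, nbr q p ∧ τ p < τ q) →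
      ∃ c ∈ gr n, ((c.1 = 1 ∨ c.1 = n) ∧ (c.2 = 1 ∨ c.2 = n)) ∧ τ p + pdist p c ≤ τ c := by
    intro p hp hq
    push_neg at hq
    have hsmall : ∀ q ∈ gr n, nbr q p → τ q < τ p := by
      intro q hqg hqn
      have h1 := hq q hqg hqn
      have h2 := hnotie p hp q hqg hqn
      omega
    have hp0 : τ p ≠ 0 := by
      obtain ⟨q, hqg, hqn⟩ := exists_nbr hn hp
      have := hsmall q hqg hqn
      omega
    have hsub : (gr n).filter (fun q => nbr q p) ⊆
        (gr n).filter (fun q => nbr q p ∧ τ q < τ p) := by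
      intro q hqm
      simp only [Finset.mem_filter] at hqm ⊢
      exact ⟨hqm.1, hqm.2, hsmall q hqm.1 hqm.2⟩
    have hcard : ((gr n).filter (fun q => nbr q p)).card ≤ 2 := by
      have := Finset.card_le_card hsub
      rw [hexact p hp hp0] at this
      exact this
    have hcor := corner_of_few_nbrs hn hp hcard
    refine ⟨p, hp, hcor, ?_⟩
    have : pdist p p = 0 := by unfold pdist; omega
    omega
  intro j
  induction j with
  | zero =>
    intro p hp hj
    by_cases hq : ∃ q ∈ gr n, nbr q p ∧ τ p < τ q
    · obtain ⟨q, hqg, hqn, hlt⟩ := hq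
      have := Finset.le_sup (f := τ) hqg
      omega
    · exact stuck p hp hq
  | succ j ih =>
    intro p hp hj
    by_cases hq : ∃ q ∈ gr n, nbr q p ∧ τ p < τ q
    · obtain ⟨q, hqg, hqn, hlt⟩ := hq
      have hqs := Finset.le_sup (f := τ) hqg
      obtain ⟨c, hcg, hcor, hb⟩ := ih q hqg (by omega)
      refine ⟨c, hcg, hcor, ?_⟩
      have ht := pdist_tri p q c
      have h1 : pdist p q = 1 := nbr_pdist hqn
      omega
    · exact stuck p hp hq

lemma exists_late {n : ℕ} (hn : 2 ≤ n) (τ : ℕ × ℕ → ℕ)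
    (hnotie : ∀ p ∈ gr n, ∀ q ∈ gr n, nbr q p → τ q ≠ τ p)
    (hexact : ∀ p ∈ gr n, τ p ≠ 0 →
      ((gr n).filter (fun q => nbr q p ∧ τ q < τ p)).card = 2) :
    ∃ c ∈ gr n, n - 1 ≤ τ c := by
  have hclimb := climb hn τ hnotie hexact
  rcases Nat.even_or_odd n with ⟨m, hm⟩ | ⟨m, hm⟩
  · -- even, n = m + m, m ≥ 1
    have hm1 : 1 ≤ m := by omega
    have hp1 : ((m, m+1) : ℕ × ℕ) ∈ gr n := mem_gr.mpr ⟨⟨by omega, by omega⟩, ⟨by omega, by omega⟩⟩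
    have hp2 : ((m+1, m+1) : ℕ × ℕ) ∈ gr n := mem_gr.mpr ⟨⟨by omega, by omega⟩, ⟨by omega, by omega⟩⟩
    have hnb : nbr (m, m+1) (m+1, m+1) := Or.inr ⟨rfl, Or.inl rfl⟩
    have hne := hnotie (m+1, m+1) hp2 (m, m+1) hp1 hnb
    rcases Nat.lt_or_ge (τ (m, m+1)) (τ (m+1, m+1)) with hlt | hge
    · obtain ⟨c, hcg, hcor, hb⟩ := hclimb ((gr n).sup τ) (m+1, m+1) hp2 (by omega)
      refine ⟨c, hcg, ?_⟩
      unfold pdist at hb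
      simp only at hb
      obtain ⟨hc1, hc2⟩ := hcor
      omega
    · have hgt : τ (m+1, m+1) < τ (m, m+1) := by omega
      obtain ⟨c, hcg, hcor, hb⟩ := hclimb ((gr n).sup τ) (m, m+1) hp1 (by omega)
      refine ⟨c, hcg, ?_⟩
      unfold pdist at hb
      simp only at hb
      obtain ⟨hc1, hc2⟩ := hcor
      omega
  · -- odd, n = 2 * m + 1
    have hp0 : ((m+1, m+1) : ℕ × ℕ) ∈ gr n := mem_gr.mpr ⟨⟨by omega, by omega⟩, ⟨by omega, by omega⟩⟩
    obtain ⟨c, hcg, hcor, hb⟩ := hclimb ((gr n).sup τ) (m+1, m+1) hp0 (by omega)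
    refine ⟨c, hcg, ?_⟩
    unfold pdist at hb
    simp only at hb
    obtain ⟨hc1, hc2⟩ := hcor
    omega
-- ## dynamics basics

lemma infected_succ (n d r : ℕ) (A : Set (Fin d → ℕ)) (t : ℕ) :
    infected n d r A (t+1) = bpStep n d r (infected n d r A t) :=
  Function.iterate_succ_apply' _ _ _

lemma subset_bpStep (n d r : ℕ) (S : Set (Fin d → ℕ)) : S ⊆ bpStep n d r S :=
  Set.subset_union_left

lemma infected_mono (n d r : ℕ) (A : Set (Fin d → ℕ)) {s t : ℕ} (h : s ≤ t) :
    infected n d r A s ⊆ infected n d r A t := by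
  obtain ⟨k, rfl⟩ := Nat.exists_eq_add_of_le h
  induction k with
  | zero => exact subset_rfl
  | succ k ih =>
    have : s + (k + 1) = (s + k) + 1 := by omega
    rw [this, infected_succ]
    exact (ih (Nat.le_add_right _ _)).trans (subset_bpStep _ _ _ _)

lemma infected_subset_grid (n d r : ℕ) (A : Set (Fin d → ℕ)) (hA : A ⊆ gridSet n d) :
    ∀ t, infected n d r A t ⊆ gridSet n d := by
  intro t
  induction t with
  | zero => exact hA
  | succ t ih =>
    rw [infected_succ]
    rintro v (hv | hv)
    · exact ih hv
    · exact hv.1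

lemma grid_finite (n d : ℕ) : (gridSet n d).Finite := by
  apply Set.Finite.subset (Set.Finite.pi (fun _ : Fin d => Set.finite_Icc 1 n))
  intro v hv
  rw [Set.mem_pi]
  intro i _
  exact ⟨(hv i).1, (hv i).2⟩

-- ## translation

def toPair (v : Fin 2 → ℕ) : ℕ × ℕ := (v 0, v 1)
def toVec (p : ℕ × ℕ) : Fin 2 → ℕ := ![p.1, p.2]

lemma toVec_toPair (v : Fin 2 → ℕ) : toVec (toPair v) = v := by
  funext i
  fin_cases i <;> simp [toVec, toPair]

lemma toPair_toVec (p : ℕ × ℕ) : toPair (toVec p) = p := by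
  simp [toVec, toPair]

lemma toPair_inj : Function.Injective toPair := by
  intro u v h
  have h0 : u 0 = v 0 := congrArg Prod.fst h
  have h1 : u 1 = v 1 := congrArg Prod.snd h
  funext i
  fin_cases i <;> assumption

lemma mem_grid_iff {n : ℕ} {v : Fin 2 → ℕ} : v ∈ gridSet n 2 ↔ toPair v ∈ gr n := by
  rw [mem_gr]
  constructor
  · intro h; exact ⟨h 0, h 1⟩
  · rintro ⟨h0, h1⟩ i
    fin_cases i
    · exact h0
    · exact h1

lemma gridAdj_iff {u v : Fin 2 → ℕ} : gridAdj u v ↔ nbr (toPair u) (toPair v) := by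
  constructor
  · rintro ⟨j, hj, ho⟩
    have hcases : j = 0 ∨ j = 1 := by
      rcases j with ⟨jv, hjv⟩
      interval_cases jv
      · exact Or.inl rfl
      · exact Or.inr rfl
    rcases hcases with rfl | rfl
    · have h1 : u 1 = v 1 := ho 1 (by decide)
      simp only [nbr, toPair]
      omega
    · have h0 : u 0 = v 0 := ho 0 (by decide)
      simp only [nbr, toPair]
      omega
  · intro h
    rcases h with ⟨h1, h2⟩ | ⟨h1, h2⟩
    · refine ⟨1, by simp only [toPair] at h2; omega, ?_⟩
      intro i hi
      fin_cases i
      · exact h1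
      · exact absurd rfl hi
    · refine ⟨0, by simp only [toPair] at h2; omega, ?_⟩
      intro i hi
      fin_cases i
      · exact absurd rfl hi
      · exact h1

-- ## lower bound

lemma lower_bound (n : ℕ) (hn : 1 ≤ n) (A : Set (Fin 2 → ℕ)) (hA : A ⊆ gridSet n 2)
    (hperc : percolates n 2 2 A) (hcard : A.ncard = n) :
    n - 1 ≤ percTime n 2 2 A := by
  rcases Nat.lt_or_ge n 2 with hsmall | h2n
  · interval_cases n
    · simp
  · have hfin := grid_finite n 2
    have hDgrid := infected_subset_grid n 2 2 A hA
    have hne : ∀ v ∈ gridSet n 2, {t | v ∈ infected n 2 2 A t}.Nonempty := by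
      intro v hv
      obtain ⟨S, ⟨t, rfl⟩, hvS⟩ := hperc hv
      exact ⟨t, hvS⟩
    set τf : ℕ × ℕ → ℕ := fun p => sInf {t | toVec p ∈ infected n 2 2 A t} with hτf
    -- seeds
    have hseedset : (((gr n).filter (fun p => τf p = 0)) : Set (ℕ × ℕ)) = toPair '' A := by
      ext p
      simp only [Finset.coe_filter, Set.mem_setOf_eq, Set.mem_image]
      constructor
      · rintro ⟨hpg, hp0⟩
        have hvg : toVec p ∈ gridSet n 2 := mem_grid_iff.mpr (by rwa [toPair_toVec])
        have := Nat.sInf_mem (hne (toVec p) hvg)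
        rw [show sInf {t | toVec p ∈ infected n 2 2 A t} = τf p from rfl, hp0] at this
        exact ⟨toVec p, this, toPair_toVec p⟩
      · rintro ⟨a, ha, rfl⟩
        have hag : a ∈ gridSet n 2 := hA ha
        refine ⟨mem_grid_iff.mp hag, ?_⟩
        have : τf (toPair a) ≤ 0 := by
          apply Nat.sInf_le
          show toVec (toPair a) ∈ infected n 2 2 A 0
          rw [toVec_toPair]
          exact ha
        omega
    have hseed : ((gr n).filter (fun p => τf p = 0)).card = n := by
      have h := congrArg Set.ncard hseedset
      rwa [Set.ncard_coe_finset, Set.ncard_image_of_injective _ toPair_inj, hcard] at h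
    -- two smaller neighbours
    have h2s : ∀ p ∈ gr n, τf p ≠ 0 →
        2 ≤ ((gr n).filter (fun q => nbr q p ∧ τf q < τf p)).card := by
      intro p hp hp0
      have hvg : toVec p ∈ gridSet n 2 := mem_grid_iff.mpr (by rwa [toPair_toVec])
      have hmem : toVec p ∈ infected n 2 2 A (τf p) := Nat.sInf_mem (hne (toVec p) hvg)
      have hnotmem : toVec p ∉ infected n 2 2 A (τf p - 1) := by
        intro hc
        have : τf p ≤ τf p - 1 := Nat.sInf_le hc
        omega
      have hstep : toVec p ∈ bpStep n 2 2 (infected n 2 2 A (τf p - 1)) := by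
        rw [← infected_succ]
        have : τf p - 1 + 1 = τf p := by omega
        rwa [this]
      rcases hstep with hL | hR
      · exact absurd hL hnotmem
      · obtain ⟨_, hcnt⟩ := hR
        set W := {u ∈ infected n 2 2 A (τf p - 1) | gridAdj u (toVec p)} with hW
        have himg : toPair '' W ⊆
            ↑((gr n).filter (fun q => nbr q p ∧ τf q < τf p)) := by
          rintro _ ⟨u, hu, rfl⟩
          have hug : u ∈ gridSet n 2 := hDgrid _ hu.1
          simp only [Finset.coe_filter, Set.mem_setOf_eq]
          refine ⟨mem_grid_iff.mp hug, ?_, ?_⟩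
          · have := gridAdj_iff.mp hu.2
            rwa [toPair_toVec] at this
          · have hle : τf (toPair u) ≤ τf p - 1 := by
              apply Nat.sInf_le
              show toVec (toPair u) ∈ infected n 2 2 A (τf p - 1)
              rw [toVec_toPair]
              exact hu.1
            omega
        calc (2 : ℕ) ≤ W.ncard := hcnt
          _ = (toPair '' W).ncard := (Set.ncard_image_of_injective _ toPair_inj).symm
          _ ≤ _ := Set.ncard_le_ncard himg (Finset.finite_toSet _)
          _ = _ := Set.ncard_coe_finset _
    obtain ⟨hnotie, hexact⟩ := rigidity n τf hseed h2s
    obtain ⟨c, hcg, hc⟩ := exists_late h2n τf hnotie hexact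
    -- relate to percTime
    have hPne : {t | gridSet n 2 ⊆ infected n 2 2 A t}.Nonempty := by
      refine ⟨hfin.toFinset.sup (fun v => sInf {t | v ∈ infected n 2 2 A t}), ?_⟩
      intro v hv
      have h1 : v ∈ infected n 2 2 A (sInf {t | v ∈ infected n 2 2 A t}) :=
        Nat.sInf_mem (hne v hv)
      exact infected_mono n 2 2 A
        (Finset.le_sup (hfin.mem_toFinset.mpr hv)) h1
    have hgridsub : gridSet n 2 ⊆ infected n 2 2 A (percTime n 2 2 A) :=
      Nat.sInf_mem hPne
    have hcv : toVec c ∈ gridSet n 2 := mem_grid_iff.mpr (by rwa [toPair_toVec])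
    have : τf c ≤ percTime n 2 2 A := Nat.sInf_le (hgridsub hcv)
    omega
-- ## the diagonal

def diagA (n : ℕ) : Set (Fin 2 → ℕ) := (fun k => toVec (k, k)) '' (Set.Icc 1 n)

lemma toVec_eval0 (p : ℕ × ℕ) : toVec p 0 = p.1 := rfl
lemma toVec_eval1 (p : ℕ × ℕ) : toVec p 1 = p.2 := rfl

lemma mem_gridSet2 {n : ℕ} {v : Fin 2 → ℕ} :
    v ∈ gridSet n 2 ↔ (1 ≤ v 0 ∧ v 0 ≤ n) ∧ (1 ≤ v 1 ∧ v 1 ≤ n) := by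
  constructor
  · intro h; exact ⟨h 0, h 1⟩
  · rintro ⟨h0, h1⟩ i
    fin_cases i
    · exact h0
    · exact h1

lemma diagA_subset (n : ℕ) : diagA n ⊆ gridSet n 2 := by
  rintro _ ⟨k, hk, rfl⟩
  rw [Set.mem_Icc] at hk
  exact mem_gridSet2.mpr ⟨⟨hk.1, hk.2⟩, ⟨hk.1, hk.2⟩⟩

lemma diagA_card (n : ℕ) : (diagA n).ncard = n := by
  have hinj : Function.Injective (fun k : ℕ => toVec (k, k)) := by
    intro a b h
    have h2 : toVec (a, a) 0 = toVec (b, b) 0 := congrFun h 0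
    simpa [toVec] using h2
  rw [diagA, Set.ncard_image_of_injective _ hinj, ← Finset.coe_Icc,
    Set.ncard_coe_finset, Nat.card_Icc]
  omega

lemma diagA_spread (n : ℕ) :
    ∀ t, ∀ v : Fin 2 → ℕ, v ∈ gridSet n 2 → (v 0 - v 1) + (v 1 - v 0) ≤ t →
      v ∈ infected n 2 2 (diagA n) t := by
  intro t
  induction t with
  | zero =>
    intro v hv hd
    have he : v 0 = v 1 := by omega
    have hm := mem_gridSet2.mp hv
    refine ⟨v 0, Set.mem_Icc.mpr ⟨hm.1.1, hm.1.2⟩, ?_⟩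
    show toVec (v 0, v 0) = v
    funext i
    fin_cases i
    · rfl
    · exact he
  | succ t ih =>
    intro v hv hd
    rcases Nat.lt_or_ge ((v 0 - v 1) + (v 1 - v 0)) (t+1) with hle | heq
    · exact infected_mono n 2 2 (diagA n) (Nat.le_succ t) (ih v hv (by omega))
    · have hm := mem_gridSet2.mp hv
      have hD : ∀ u : Fin 2 → ℕ, u ∈ gridSet n 2 → (u 0 - u 1) + (u 1 - u 0) ≤ t →
          u ∈ infected n 2 2 (diagA n) t := ih
      rw [infected_succ]
      rcases Nat.lt_or_ge (v 1) (v 0) with hgt | hlt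
      · -- v 0 = v 1 + (t+1)
        have hv0 : v 0 = v 1 + (t + 1) := by omega
        set u1 : Fin 2 → ℕ := toVec (v 0 - 1, v 1) with hu1
        set u2 : Fin 2 → ℕ := toVec (v 0, v 1 + 1) with hu2
        have hu1g : u1 ∈ gridSet n 2 :=
          mem_gridSet2.mpr ⟨⟨by simp [hu1, toVec_eval0] <;> omega, by simp [hu1, toVec_eval0] <;> omega⟩,
            ⟨by simp [hu1, toVec_eval1] <;> omega, by simp [hu1, toVec_eval1] <;> omega⟩⟩
        have hu2g : u2 ∈ gridSet n 2 :=
          mem_gridSet2.mpr ⟨⟨by simp [hu2, toVec_eval0] <;> omega, by simp [hu2, toVec_eval0] <;> omega⟩,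
            ⟨by simp [hu2, toVec_eval1] <;> omega, by simp [hu2, toVec_eval1] <;> omega⟩⟩
        have hu1m : u1 ∈ infected n 2 2 (diagA n) t := by
          apply hD u1 hu1g
          simp [hu1, toVec_eval0, toVec_eval1]
          omega
        have hu2m : u2 ∈ infected n 2 2 (diagA n) t := by
          apply hD u2 hu2g
          simp [hu2, toVec_eval0, toVec_eval1]
          omega
        right
        refine ⟨hv, ?_⟩
        have ha1 : gridAdj u1 v := by
          refine ⟨0, ?_, ?_⟩
          · right
            simp [hu1, toVec_eval0]
            omega
          · intro i hi
            fin_cases i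
            · exact absurd rfl hi
            · simp [hu1, toVec_eval1]
        have ha2 : gridAdj u2 v := by
          refine ⟨1, ?_, ?_⟩
          · left
            simp [hu2, toVec_eval1]
          · intro i hi
            fin_cases i
            · simp [hu2, toVec_eval0]
            · exact absurd rfl hi
        have hne : u1 ≠ u2 := by
          intro h
          have : u1 0 = u2 0 := by rw [h]
          simp [hu1, hu2, toVec_eval0] at this
          omega
        have hpair : ({u1, u2} : Set (Fin 2 → ℕ)) ⊆
            {u ∈ infected n 2 2 (diagA n) t | gridAdj u v} := by
          rintro u (rfl | rfl)
          · exact ⟨hu1m, ha1⟩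
          · exact ⟨hu2m, ha2⟩
        calc (2 : ℕ) = ({u1, u2} : Set (Fin 2 → ℕ)).ncard := (Set.ncard_pair hne).symm
          _ ≤ _ := Set.ncard_le_ncard hpair
            (((grid_finite n 2).subset (fun u hu =>
              infected_subset_grid n 2 2 (diagA n) (diagA_subset n) t hu.1)))
      · -- v 1 = v 0 + (t+1)
        have hv1 : v 1 = v 0 + (t + 1) := by omega
        set u1 : Fin 2 → ℕ := toVec (v 0, v 1 - 1) with hu1
        set u2 : Fin 2 → ℕ := toVec (v 0 + 1, v 1) with hu2
        have hu1g : u1 ∈ gridSet n 2 :=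
          mem_gridSet2.mpr ⟨⟨by simp [hu1, toVec_eval0] <;> omega, by simp [hu1, toVec_eval0] <;> omega⟩,
            ⟨by simp [hu1, toVec_eval1] <;> omega, by simp [hu1, toVec_eval1] <;> omega⟩⟩
        have hu2g : u2 ∈ gridSet n 2 :=
          mem_gridSet2.mpr ⟨⟨by simp [hu2, toVec_eval0] <;> omega, by simp [hu2, toVec_eval0] <;> omega⟩,
            ⟨by simp [hu2, toVec_eval1] <;> omega, by simp [hu2, toVec_eval1] <;> omega⟩⟩
        have hu1m : u1 ∈ infected n 2 2 (diagA n) t := by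
          apply hD u1 hu1g
          simp [hu1, toVec_eval0, toVec_eval1]
          omega
        have hu2m : u2 ∈ infected n 2 2 (diagA n) t := by
          apply hD u2 hu2g
          simp [hu2, toVec_eval0, toVec_eval1]
          omega
        right
        refine ⟨hv, ?_⟩
        have ha1 : gridAdj u1 v := by
          refine ⟨1, ?_, ?_⟩
          · right
            simp [hu1, toVec_eval1]
            omega
          · intro i hi
            fin_cases i
            · simp [hu1, toVec_eval0]
            · exact absurd rfl hi
        have ha2 : gridAdj u2 v := by
          refine ⟨0, ?_, ?_⟩
          · left
            simp [hu2, toVec_eval0]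
          · intro i hi
            fin_cases i
            · exact absurd rfl hi
            · simp [hu2, toVec_eval1]
        have hne : u1 ≠ u2 := by
          intro h
          have : u1 1 = u2 1 := by rw [h]
          simp [hu1, hu2, toVec_eval1] at this
          omega
        have hpair : ({u1, u2} : Set (Fin 2 → ℕ)) ⊆
            {u ∈ infected n 2 2 (diagA n) t | gridAdj u v} := by
          rintro u (rfl | rfl)
          · exact ⟨hu1m, ha1⟩
          · exact ⟨hu2m, ha2⟩
        calc (2 : ℕ) = ({u1, u2} : Set (Fin 2 → ℕ)).ncard := (Set.ncard_pair hne).symm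
          _ ≤ _ := Set.ncard_le_ncard hpair
            (((grid_finite n 2).subset (fun u hu =>
              infected_subset_grid n 2 2 (diagA n) (diagA_subset n) t hu.1)))

lemma diagA_fills (n : ℕ) (hn : 1 ≤ n) :
    gridSet n 2 ⊆ infected n 2 2 (diagA n) (n - 1) := by
  intro v hv
  have hm := mem_gridSet2.mp hv
  exact diagA_spread n (n-1) v hv (by omega)

lemma diagA_perc (n : ℕ) (hn : 1 ≤ n) : percolates n 2 2 (diagA n) := by
  intro v hv
  exact Set.mem_iUnion.mpr ⟨n - 1, diagA_fills n hn hv⟩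

lemma diagA_time (n : ℕ) (hn : 1 ≤ n) : percTime n 2 2 (diagA n) = n - 1 := by
  apply le_antisymm
  · exact Nat.sInf_le (diagA_fills n hn)
  · exact lower_bound n hn (diagA n) (diagA_subset n) (diagA_perc n hn) (diagA_card n)

theorem min_time_dim_two (n : ℕ) (hn : 1 ≤ n) :
    (∀ A : Set (Fin 2 → ℕ), A ⊆ gridSet n 2 → percolates n 2 2 A → A.ncard = n →
      n - 1 ≤ percTime n 2 2 A) ∧
    sInf {T : ℕ | ∃ A : Set (Fin 2 → ℕ), A ⊆ gridSet n 2 ∧ percolates n 2 2 A ∧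
        A.ncard = n ∧ percTime n 2 2 A = T} = n - 1 := by
  constructor
  · exact fun A h1 h2 h3 => lower_bound n hn A h1 h2 h3
  · have hmem : (n - 1) ∈ {T : ℕ | ∃ A : Set (Fin 2 → ℕ), A ⊆ gridSet n 2 ∧
        percolates n 2 2 A ∧ A.ncard = n ∧ percTime n 2 2 A = T} :=
      ⟨diagA n, diagA_subset n, diagA_perc n hn, diagA_card n, diagA_time n hn⟩
    apply le_antisymm
    · exact Nat.sInf_le hmem
    · apply le_csInf ⟨n - 1, hmem⟩
      rintro T ⟨A, hA, hp, hc, rfl⟩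
      exact lower_bound n hn A hA hp hc
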